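/- Let ε ∈ ℂ with ε² + ε + 1 = 0. In R = MvPolynomial (Fin 3) ℂ with variables x, y, z, let P₄,…,P₁₂ be the nine ideals P₄=(x−z, y−z), P₅=(y−εx, z−ε²x), P₆=(y−ε²x, z−εx), P₇=(x−εz, y−z), P₈=(x−z, y−εz), P₉=(y−x, z−εx), P₁₀=(x−ε²z, y−z), P₁₁=(x−z, y−ε²z), P₁₂=(y−x, z−ε²x). Then P₄ ∩ P₅ ∩ ⋯ ∩ P₁₂ = Ideal.span {x³ − z³, y³ − z³}. -/

import Mathlib

open MvPolynomial

private abbrev Rc := MvPolynomial (Fin 3) ℂ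

private lemma sub_aeval_mem (f : Fin 3 → Rc) (I : Ideal Rc)
    (h : ∀ i, X i - f i ∈ I) (p : Rc) : p - aeval f p ∈ I := by
  induction p using MvPolynomial.induction_on with
  | C a => simp
  | add p q hp hq =>
      rw [map_add]
      have := I.add_mem hp hq
      convert this using 1; ring
  | mul_X p i hp =>
      rw [map_mul, aeval_X]
      have := I.add_mem (I.mul_mem_left (X i) hp) (I.mul_mem_left (aeval f p) (h i))
      convert this using 1; ring

private lemma not_dvd_eval (v : Fin 3 → ℂ) {f g : Rc}
    (hf : eval v f = 0) (hg : eval v g ≠ 0) : ¬ f ∣ g := by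
  rintro ⟨c, rfl⟩
  exact hg (by rw [map_mul, hf, zero_mul])

private lemma prime_X_sub (i j : Fin 3) (hij : j ≠ i) (a : ℂ) :
    Prime (X i - C a * X j : Rc) := by
  classical
  have hX0 : Prime (X (0 : Fin 3) : Rc) := by
    rw [← MulEquiv.prime_iff (finSuccEquiv ℂ 2).toMulEquiv]
    simpa [finSuccEquiv_X_zero] using (Polynomial.prime_X)
  have hXi : Prime (X i : Rc) := by
    rw [← MulEquiv.prime_iff (renameEquiv ℂ (Equiv.swap i 0)).toMulEquiv]
    simpa [renameEquiv_apply, rename_X, Equiv.swap_apply_left] using hX0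
  let f : Fin 3 → Rc := fun k => if k = i then X i + C a * X j else X k
  let g : Fin 3 → Rc := fun k => if k = i then X i - C a * X j else X k
  have hfg : ∀ k, aeval g (f k) = X k := by
    intro k
    by_cases hk : k = i
    · subst hk; simp [f, g, hij]
    · simp [f, g, hk]
  have hgf : ∀ k, aeval f (g k) = X k := by
    intro k
    by_cases hk : k = i
    · subst hk; simp [f, g, hij]
    · simp [f, g, hk]
  let e : Rc ≃ₐ[ℂ] Rc := AlgEquiv.ofAlgHom (aeval g) (aeval f)
    (by apply algHom_ext; intro k; simpa using hfg k)
    (by apply algHom_ext; intro k; simpa using hgf k)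
  have he : e (X i) = X i - C a * X j := by simp [e, g]
  have := (MulEquiv.prime_iff e.toMulEquiv).mpr hXi
  simpa [he] using this

private lemma key (g t₀ t₁ t₂ : Rc) (σ₁ σ₂ : Rc →ₐ[ℂ] Rc)
    (h1t : σ₁ t₁ = 0) (h2t : σ₂ t₂ = 0) (h1g : σ₁ g = g) (h2g : σ₂ g = g)
    (hs1 : ∀ q : Rc, q - σ₁ q ∈ Ideal.span {t₁})
    (hs2 : ∀ q : Rc, q - σ₂ q ∈ Ideal.span {t₂})
    (hr1 : IsRelPrime g (σ₁ t₀)) (hr2 : IsRelPrime g (σ₂ t₀ * σ₂ t₁))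
    (p : Rc) (hp0 : p ∈ Ideal.span {t₀, g}) (hp1 : p ∈ Ideal.span {t₁, g})
    (hp2 : p ∈ Ideal.span {t₂, g}) : p ∈ Ideal.span {t₀ * t₁ * t₂, g} := by
  obtain ⟨a, b, hab⟩ := Ideal.mem_span_pair.mp hp0
  obtain ⟨a₁, b₁, hab1⟩ := Ideal.mem_span_pair.mp hp1
  obtain ⟨a₂, b₂, hab2⟩ := Ideal.mem_span_pair.mp hp2
  have e0 := congrArg σ₁ hab
  have e1 := congrArg σ₁ hab1
  simp only [map_add, map_mul, h1g, h1t, mul_zero, zero_add] at e0 e1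
  have hd1 : g ∣ σ₁ a * σ₁ t₀ := ⟨σ₁ b₁ - σ₁ b, by linear_combination e0 - e1⟩
  obtain ⟨w, hw⟩ := hr1.dvd_of_dvd_mul_right hd1
  obtain ⟨v, hv⟩ := Ideal.mem_span_singleton.mp (hs1 a)
  have hp' : p = (t₀ * t₁) * v + (w * t₀ + b) * g := by
    linear_combination -hab + t₀ * hv + t₀ * hw
  have e2 := congrArg σ₂ hab2
  have e0' := congrArg σ₂ hp'
  simp only [map_add, map_mul, h2g, h2t, mul_zero, zero_add] at e2 e0'
  have hd2 : g ∣ σ₂ v * (σ₂ t₀ * σ₂ t₁) :=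
    ⟨σ₂ b₂ - (σ₂ w * σ₂ t₀ + σ₂ b), by linear_combination - e2 - e0'⟩
  obtain ⟨w', hw'⟩ := hr2.dvd_of_dvd_mul_right hd2
  obtain ⟨u, hu⟩ := Ideal.mem_span_singleton.mp (hs2 v)
  exact Ideal.mem_span_pair.mpr
    ⟨u, w * t₀ + b + t₀ * t₁ * w', by linear_combination - hp' - t₀ * t₁ * hu - t₀ * t₁ * hw'⟩

private lemma hCeps (ε : ℂ) (hε : ε ^ 2 + ε + 1 = 0) : (C ε : Rc) ^ 2 + C ε + 1 = 0 := by
  have h : ((C : ℂ →+* Rc)) (ε ^ 2 + ε + 1) = ((C : ℂ →+* Rc)) 0 := by rw [hε]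
  simpa using h

private lemma eps_ne1 (ε : ℂ) (hε : ε ^ 2 + ε + 1 = 0) : ε - 1 ≠ 0 := by
  intro h
  rw [sub_eq_zero] at h
  subst h
  norm_num at hε

private lemma eps_ne21 (ε : ℂ) (hε : ε ^ 2 + ε + 1 = 0) : ε ^ 2 - 1 ≠ 0 := by
  intro h
  rw [sub_eq_zero] at h
  have h2 : ε = -2 := by linear_combination hε - h
  rw [h2] at h
  norm_num at h

private lemma eps_ne2e (ε : ℂ) (hε : ε ^ 2 + ε + 1 = 0) : ε ^ 2 - ε ≠ 0 := by
  intro h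
  rw [sub_eq_zero] at h
  have h2 : ε = -(1/2) := by linear_combination (-(1/2)) * h + (1/2) * hε
  rw [h2] at h
  norm_num at h

private lemma cube_id (ε : ℂ) (hε : ε ^ 2 + ε + 1 = 0) (u w : Rc) :
    (u - w) * (u - C ε * w) * (u - C ε ^ 2 * w) = u ^ 3 - w ^ 3 := by
  linear_combination (w ^ 3 - u ^ 2 * w - C ε * w ^ 3 + C ε * u * w ^ 2) * hCeps ε hε

private lemma row (ε : ℂ) (hε : ε ^ 2 + ε + 1 = 0) (b : ℂ) (p : Rc)
    (h0 : p ∈ Ideal.span {X 0 - X 2, X 1 - C b * X 2})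
    (h1 : p ∈ Ideal.span {X 0 - C ε * X 2, X 1 - C b * X 2})
    (h2 : p ∈ Ideal.span {X 0 - C ε ^ 2 * X 2, X 1 - C b * X 2}) :
    p ∈ Ideal.span {(X 0 : Rc) ^ 3 - X 2 ^ 3, X 1 - C b * X 2} := by
  have hg : Prime (X 1 - C b * X 2 : Rc) := prime_X_sub 1 2 (by decide) b
  set σ₁ : Rc →ₐ[ℂ] Rc := aeval ![C ε * X 2, X 1, X 2] with hσ₁
  set σ₂ : Rc →ₐ[ℂ] Rc := aeval ![C ε ^ 2 * X 2, X 1, X 2] with hσ₂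
  have h10 : σ₁ (X 0 - X 2) = C ε * X 2 - X 2 := by simp [hσ₁]
  have h20 : σ₂ (X 0 - X 2) = C ε ^ 2 * X 2 - X 2 := by simp [hσ₂]
  have h21 : σ₂ (X 0 - C ε * X 2) = C ε ^ 2 * X 2 - C ε * X 2 := by simp [hσ₂]
  have hr1 : IsRelPrime ((X 1 : Rc) - C b * X 2) (σ₁ (X 0 - X 2)) := by
    rw [h10]
    exact (hg.irreducible.isRelPrime_iff_not_dvd).mpr
      (not_dvd_eval ![0, b, 1] (by simp) (by simpa using eps_ne1 ε hε))
  have hr2 : IsRelPrime ((X 1 : Rc) - C b * X 2)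
      (σ₂ (X 0 - X 2) * σ₂ (X 0 - C ε * X 2)) := by
    rw [h20, h21]
    exact IsRelPrime.mul_right
      ((hg.irreducible.isRelPrime_iff_not_dvd).mpr
        (not_dvd_eval ![0, b, 1] (by simp) (by simpa using eps_ne21 ε hε)))
      ((hg.irreducible.isRelPrime_iff_not_dvd).mpr
        (not_dvd_eval ![0, b, 1] (by simp) (by simpa using eps_ne2e ε hε)))
  have hk := key (X 1 - C b * X 2) (X 0 - X 2) (X 0 - C ε * X 2) (X 0 - C ε ^ 2 * X 2) σ₁ σ₂
    (by simp [hσ₁]) (by simp [hσ₂]) (by simp [hσ₁]) (by simp [hσ₂])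
    (fun q => sub_aeval_mem _ _ (by
      intro k; fin_cases k <;> simp [hσ₁, Ideal.mem_span_singleton_self]) q)
    (fun q => sub_aeval_mem _ _ (by
      intro k; fin_cases k <;> simp [hσ₂, Ideal.mem_span_singleton_self]) q)
    hr1 hr2 p h0 h1 h2
  rwa [cube_id ε hε (X 0) (X 2)] at hk

private lemma col (ε : ℂ) (hε : ε ^ 2 + ε + 1 = 0) (p : Rc)
    (h0 : p ∈ Ideal.span {(X 0 : Rc) ^ 3 - X 2 ^ 3, X 1 - X 2})
    (h1 : p ∈ Ideal.span {(X 0 : Rc) ^ 3 - X 2 ^ 3, X 1 - C ε * X 2})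
    (h2 : p ∈ Ideal.span {(X 0 : Rc) ^ 3 - X 2 ^ 3, X 1 - C ε ^ 2 * X 2}) :
    p ∈ Ideal.span {(X 0 : Rc) ^ 3 - X 2 ^ 3, X 1 ^ 3 - X 2 ^ 3} := by
  rw [Ideal.span_pair_comm] at h0 h1 h2
  have hp0 : Prime ((X 0 : Rc) - X 2) := by
    have := prime_X_sub 0 2 (by decide) 1
    rwa [C_1, one_mul] at this
  have hp1 : Prime ((X 0 : Rc) - C ε * X 2) := prime_X_sub 0 2 (by decide) ε
  have hp2 : Prime ((X 0 : Rc) - C ε ^ 2 * X 2) := by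
    have := prime_X_sub 0 2 (by decide) (ε ^ 2)
    rwa [map_pow] at this
  have hfact : ((X 0 : Rc) - X 2) * (X 0 - C ε * X 2) * (X 0 - C ε ^ 2 * X 2)
      = X 0 ^ 3 - X 2 ^ 3 := cube_id ε hε (X 0) (X 2)
  set σ₁ : Rc →ₐ[ℂ] Rc := aeval ![X 0, C ε * X 2, X 2] with hσ₁
  set σ₂ : Rc →ₐ[ℂ] Rc := aeval ![X 0, C ε ^ 2 * X 2, X 2] with hσ₂
  have h10 : σ₁ (X 1 - X 2) = C ε * X 2 - X 2 := by simp [hσ₁]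
  have h20 : σ₂ (X 1 - X 2) = C ε ^ 2 * X 2 - X 2 := by simp [hσ₂]
  have h21 : σ₂ (X 1 - C ε * X 2) = C ε ^ 2 * X 2 - C ε * X 2 := by simp [hσ₂]
  have hr1 : IsRelPrime ((X 0 : Rc) ^ 3 - X 2 ^ 3) (σ₁ (X 1 - X 2)) := by
    rw [h10, ← hfact]
    refine IsRelPrime.mul_left (IsRelPrime.mul_left ?_ ?_) ?_
    · exact (hp0.irreducible.isRelPrime_iff_not_dvd).mpr
        (not_dvd_eval ![1, 0, 1] (by simp) (by simpa using eps_ne1 ε hε))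
    · exact (hp1.irreducible.isRelPrime_iff_not_dvd).mpr
        (not_dvd_eval ![ε, 0, 1] (by simp) (by simpa using eps_ne1 ε hε))
    · exact (hp2.irreducible.isRelPrime_iff_not_dvd).mpr
        (not_dvd_eval ![ε ^ 2, 0, 1] (by simp) (by simpa using eps_ne1 ε hε))
  have hr2 : IsRelPrime ((X 0 : Rc) ^ 3 - X 2 ^ 3)
      (σ₂ (X 1 - X 2) * σ₂ (X 1 - C ε * X 2)) := by
    rw [h20, h21, ← hfact]
    have hval : ∀ a : ℂ, eval ![a, 0, 1]
        (((C ε ^ 2 * X 2 - X 2) * (C ε ^ 2 * X 2 - C ε * X 2)) : Rc) ≠ 0 := by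
      intro a
      simpa using mul_ne_zero (eps_ne21 ε hε) (eps_ne2e ε hε)
    refine IsRelPrime.mul_left (IsRelPrime.mul_left ?_ ?_) ?_
    · exact (hp0.irreducible.isRelPrime_iff_not_dvd).mpr
        (not_dvd_eval ![1, 0, 1] (by simp) (hval 1))
    · exact (hp1.irreducible.isRelPrime_iff_not_dvd).mpr
        (not_dvd_eval ![ε, 0, 1] (by simp) (hval ε))
    · exact (hp2.irreducible.isRelPrime_iff_not_dvd).mpr
        (not_dvd_eval ![ε ^ 2, 0, 1] (by simp) (hval (ε ^ 2)))
  have hk := key (X 0 ^ 3 - X 2 ^ 3) (X 1 - X 2) (X 1 - C ε * X 2) (X 1 - C ε ^ 2 * X 2) σ₁ σ₂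
    (by simp [hσ₁]) (by simp [hσ₂]) (by simp [hσ₁]) (by simp [hσ₂])
    (fun q => sub_aeval_mem _ _ (by
      intro k; fin_cases k <;> simp [hσ₁, Ideal.mem_span_singleton_self]) q)
    (fun q => sub_aeval_mem _ _ (by
      intro k; fin_cases k <;> simp [hσ₂, Ideal.mem_span_singleton_self]) q)
    hr1 hr2 p h0 h1 h2
  rw [cube_id ε hε (X 1) (X 2)] at hk
  rwa [Ideal.span_pair_comm] at hk

/-- The vanishing ideals of the nine points (1:1:1), (1:ε:ε²), (1:ε²:ε), (ε:1:1),
(1:ε:1), (1:1:ε), (ε²:1:1), (1:ε²:1), (1:1:ε²), i.e. P₄, …, P₁₂. -/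
noncomputable def Q (ε : ℂ) : Fin 9 → Ideal (MvPolynomial (Fin 3) ℂ) :=
  fun i =>
    let x : MvPolynomial (Fin 3) ℂ := X 0
    let y : MvPolynomial (Fin 3) ℂ := X 1
    let z : MvPolynomial (Fin 3) ℂ := X 2
    match i with
    | 0 => Ideal.span {x - z, y - z}
    | 1 => Ideal.span {y - C ε * x, z - C ε ^ 2 * x}
    | 2 => Ideal.span {y - C ε ^ 2 * x, z - C ε * x}
    | 3 => Ideal.span {x - C ε * z, y - z}
    | 4 => Ideal.span {x - z, y - C ε * z}
    | 5 => Ideal.span {y - x, z - C ε * x}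
    | 6 => Ideal.span {x - C ε ^ 2 * z, y - z}
    | 7 => Ideal.span {x - z, y - C ε ^ 2 * z}
    | 8 => Ideal.span {y - x, z - C ε ^ 2 * x}

theorem J_eq_span (ε : ℂ) (hε : ε ^ 2 + ε + 1 = 0) :
    (⨅ i : Fin 9, Q ε i) =
      Ideal.span {X 0 ^ 3 - X 2 ^ 3, X 1 ^ 3 - X 2 ^ 3} := by
  have hC := hCeps ε hε
  apply le_antisymm
  · intro p hp
    have h : ∀ i, p ∈ Q ε i := fun i => (Ideal.mem_iInf).mp hp i
    have h0 : p ∈ Ideal.span {(X 0 : Rc) - X 2, X 1 - X 2} := h 0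
    have h3 : p ∈ Ideal.span {(X 0 : Rc) - C ε * X 2, X 1 - X 2} := h 3
    have h4 : p ∈ Ideal.span {(X 0 : Rc) - X 2, X 1 - C ε * X 2} := h 4
    have h6 : p ∈ Ideal.span {(X 0 : Rc) - C ε ^ 2 * X 2, X 1 - X 2} := h 6
    have h7 : p ∈ Ideal.span {(X 0 : Rc) - X 2, X 1 - C ε ^ 2 * X 2} := h 7
    have g1 : p ∈ Ideal.span {(X 0 : Rc) - C ε * X 2, X 1 - C ε ^ 2 * X 2} := by
      refine Ideal.span_le.mpr ?_ (h 1 : p ∈ Ideal.span {(X 1 : Rc) - C ε * X 0, X 2 - C ε ^ 2 * X 0})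
      rintro q hq
      simp only [Set.mem_insert_iff, Set.mem_singleton_iff] at hq
      rcases hq with rfl | rfl
      · exact Ideal.mem_span_pair.mpr ⟨-C ε, 1, by ring⟩
      · exact Ideal.mem_span_pair.mpr ⟨-C ε ^ 2, 0, by
          linear_combination ((C ε - 1) * X 2) * hC⟩
    have g2 : p ∈ Ideal.span {(X 0 : Rc) - C ε ^ 2 * X 2, X 1 - C ε * X 2} := by
      refine Ideal.span_le.mpr ?_ (h 2 : p ∈ Ideal.span {(X 1 : Rc) - C ε ^ 2 * X 0, X 2 - C ε * X 0})
      rintro q hq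
      simp only [Set.mem_insert_iff, Set.mem_singleton_iff] at hq
      rcases hq with rfl | rfl
      · exact Ideal.mem_span_pair.mpr ⟨-C ε ^ 2, 1, by
          linear_combination ((C ε ^ 2 - C ε) * X 2) * hC⟩
      · exact Ideal.mem_span_pair.mpr ⟨-C ε, 0, by
          linear_combination ((C ε - 1) * X 2) * hC⟩
    have g5 : p ∈ Ideal.span {(X 0 : Rc) - C ε ^ 2 * X 2, X 1 - C ε ^ 2 * X 2} := by
      refine Ideal.span_le.mpr ?_ (h 5 : p ∈ Ideal.span {(X 1 : Rc) - X 0, X 2 - C ε * X 0})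
      rintro q hq
      simp only [Set.mem_insert_iff, Set.mem_singleton_iff] at hq
      rcases hq with rfl | rfl
      · exact Ideal.mem_span_pair.mpr ⟨-1, 1, by ring⟩
      · exact Ideal.mem_span_pair.mpr ⟨-C ε, 0, by
          linear_combination ((C ε - 1) * X 2) * hC⟩
    have g8 : p ∈ Ideal.span {(X 0 : Rc) - C ε * X 2, X 1 - C ε * X 2} := by
      refine Ideal.span_le.mpr ?_ (h 8 : p ∈ Ideal.span {(X 1 : Rc) - X 0, X 2 - C ε ^ 2 * X 0})
      rintro q hq
      simp only [Set.mem_insert_iff, Set.mem_singleton_iff] at hq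
      rcases hq with rfl | rfl
      · exact Ideal.mem_span_pair.mpr ⟨-1, 1, by ring⟩
      · exact Ideal.mem_span_pair.mpr ⟨-C ε ^ 2, 0, by
          linear_combination ((C ε - 1) * X 2) * hC⟩
    have r0 := row ε hε 1 p (by rw [C_1, one_mul]; exact h0)
      (by rw [C_1, one_mul]; exact h3) (by rw [C_1, one_mul]; exact h6)
    rw [C_1, one_mul] at r0
    have r1 := row ε hε ε p h4 g8 g2
    have r2 := row ε hε (ε ^ 2) p (by rw [map_pow]; exact h7)
      (by rw [map_pow]; exact g1) (by rw [map_pow]; exact g5)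
    rw [map_pow] at r2
    exact col ε hε p r0 r1 r2
  · rw [Ideal.span_le]
    rintro q hq
    simp only [Set.mem_insert_iff, Set.mem_singleton_iff] at hq
    rw [SetLike.mem_coe, Ideal.mem_iInf]
    intro i
    fin_cases i <;> rcases hq with rfl | rfl
    · exact Ideal.mem_span_pair.mpr ⟨X 0 ^ 2 + X 0 * X 2 + X 2 ^ 2, 0, by ring⟩
    · exact Ideal.mem_span_pair.mpr ⟨0, X 1 ^ 2 + X 1 * X 2 + X 2 ^ 2, by ring⟩
    · exact Ideal.mem_span_pair.mpr ⟨0, -(X 2 ^ 2 + C ε ^ 2 * X 0 * X 2 + C ε * X 0 ^ 2), by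
        linear_combination ((C ε - 1) * X 0 ^ 3 + (C ε ^ 2 - C ε) * X 0 ^ 2 * X 2) * hC⟩
    · exact Ideal.mem_span_pair.mpr ⟨X 1 ^ 2 + C ε * X 0 * X 1 + C ε ^ 2 * X 0 ^ 2,
        -(X 2 ^ 2 + C ε ^ 2 * X 0 * X 2 + C ε * X 0 ^ 2), by
        linear_combination ((C ε ^ 2 - C ε) * X 0 ^ 2 * X 2) * hC⟩
    · exact Ideal.mem_span_pair.mpr ⟨0, -(X 2 ^ 2 + C ε * X 0 * X 2 + C ε ^ 2 * X 0 ^ 2), by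
        linear_combination ((C ε - 1) * X 0 ^ 3) * hC⟩
    · exact Ideal.mem_span_pair.mpr ⟨X 1 ^ 2 + C ε ^ 2 * X 0 * X 1 + C ε * X 0 ^ 2,
        -(X 2 ^ 2 + C ε * X 0 * X 2 + C ε ^ 2 * X 0 ^ 2), by
        linear_combination ((C ε - C ε ^ 2) * X 0 ^ 2 * X 1) * hC⟩
    · exact Ideal.mem_span_pair.mpr ⟨X 0 ^ 2 + C ε * X 0 * X 2 + C ε ^ 2 * X 2 ^ 2, 0, by
        linear_combination ((1 - C ε) * X 2 ^ 3) * hC⟩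
    · exact Ideal.mem_span_pair.mpr ⟨0, X 1 ^ 2 + X 1 * X 2 + X 2 ^ 2, by ring⟩
    · exact Ideal.mem_span_pair.mpr ⟨X 0 ^ 2 + X 0 * X 2 + X 2 ^ 2, 0, by ring⟩
    · exact Ideal.mem_span_pair.mpr ⟨0, X 1 ^ 2 + C ε * X 1 * X 2 + C ε ^ 2 * X 2 ^ 2, by
        linear_combination ((1 - C ε) * X 2 ^ 3) * hC⟩
    · exact Ideal.mem_span_pair.mpr ⟨0, -(X 2 ^ 2 + C ε * X 0 * X 2 + C ε ^ 2 * X 0 ^ 2), by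
        linear_combination ((C ε - 1) * X 0 ^ 3) * hC⟩
    · exact Ideal.mem_span_pair.mpr ⟨X 1 ^ 2 + X 0 * X 1 + X 0 ^ 2,
        -(X 2 ^ 2 + C ε * X 0 * X 2 + C ε ^ 2 * X 0 ^ 2), by
        linear_combination ((C ε - 1) * X 0 ^ 3) * hC⟩
    · exact Ideal.mem_span_pair.mpr ⟨X 0 ^ 2 + C ε ^ 2 * X 0 * X 2 + C ε * X 2 ^ 2, 0, by
        linear_combination ((1 - C ε) * X 2 ^ 3 + (C ε - C ε ^ 2) * X 0 * X 2 ^ 2) * hC⟩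
    · exact Ideal.mem_span_pair.mpr ⟨0, X 1 ^ 2 + X 1 * X 2 + X 2 ^ 2, by ring⟩
    · exact Ideal.mem_span_pair.mpr ⟨X 0 ^ 2 + X 0 * X 2 + X 2 ^ 2, 0, by ring⟩
    · exact Ideal.mem_span_pair.mpr ⟨0, X 1 ^ 2 + C ε ^ 2 * X 1 * X 2 + C ε * X 2 ^ 2, by
        linear_combination ((1 - C ε) * X 2 ^ 3 + (C ε - C ε ^ 2) * X 1 * X 2 ^ 2) * hC⟩
    · exact Ideal.mem_span_pair.mpr ⟨0, -(X 2 ^ 2 + C ε ^ 2 * X 0 * X 2 + C ε * X 0 ^ 2), by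
        linear_combination ((C ε - 1) * X 0 ^ 3 + (C ε ^ 2 - C ε) * X 0 ^ 2 * X 2) * hC⟩
    · exact Ideal.mem_span_pair.mpr ⟨X 1 ^ 2 + X 0 * X 1 + X 0 ^ 2,
        -(X 2 ^ 2 + C ε ^ 2 * X 0 * X 2 + C ε * X 0 ^ 2), by
        linear_combination ((C ε - 1) * X 0 ^ 3 + (C ε ^ 2 - C ε) * X 0 ^ 2 * X 2) * hC⟩
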